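/- Let K be a complete algebraically closed non-archimedean field with |p| < 1, and let F = (F_1,...,F_N) where F_i = G_i^p + ϖ f_i with G_i, f_i ∈ K°[X_1,...,X_N] and |p| ≤ |ϖ| < 1. Suppose x_0 ∈ (K°)^N is a fixed point of F. Then for every x ∈ (K°)^N with red(x) = red(x_0) and x ≠ x_0, one has ‖F(x) - F(x_0)‖ < ‖x - x_0‖, where ‖·‖ is the sup norm. In particular F is attracting on the residue disc of x_0. -/
import Mathlib

open IsUltrametricDist Finset

section Aux
variable {K : Type*} [NontriviallyNormedField K] [IsUltrametricDist K]

lemma aux_pow_sub {δ : ℝ} (hδ : 0 ≤ δ) (n : ℕ) (a b : K)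
    (ha : ‖a‖ ≤ 1) (hb : ‖b‖ ≤ 1) (hab : ‖a - b‖ ≤ δ) :
    ‖a ^ n - b ^ n‖ ≤ δ := by
  induction n with
  | zero => simpa using hδ
  | succ n ih =>
    have h : a ^ (n + 1) - b ^ (n + 1) = a * (a ^ n - b ^ n) + (a - b) * b ^ n := by ring
    rw [h]
    refine (norm_add_le_max _ _).trans (max_le ?_ ?_)
    · rw [norm_mul]
      calc ‖a‖ * ‖a ^ n - b ^ n‖ ≤ 1 * δ := mul_le_mul ha ih (norm_nonneg _) zero_le_one
        _ = δ := one_mul δ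
    · rw [norm_mul, norm_pow]
      calc ‖a - b‖ * ‖b‖ ^ n ≤ δ * 1 :=
          mul_le_mul hab (pow_le_one₀ (norm_nonneg b) hb) (by positivity) hδ
        _ = δ := mul_one δ

lemma aux_prod_sub {δ : ℝ} (hδ : 0 ≤ δ) {ι : Type*} (s : Finset ι) (a b : ι → K)
    (ha : ∀ i, ‖a i‖ ≤ 1) (hb : ∀ i, ‖b i‖ ≤ 1) (hab : ∀ i, ‖a i - b i‖ ≤ δ) :
    ‖∏ i ∈ s, a i - ∏ i ∈ s, b i‖ ≤ δ := by
  classical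
  induction s using Finset.induction with
  | empty => simpa using hδ
  | @insert c s hcs ih =>
    rw [Finset.prod_insert hcs, Finset.prod_insert hcs]
    have h : a c * ∏ i ∈ s, a i - b c * ∏ i ∈ s, b i
        = a c * (∏ i ∈ s, a i - ∏ i ∈ s, b i) + (a c - b c) * ∏ i ∈ s, b i := by ring
    rw [h]
    refine (norm_add_le_max _ _).trans (max_le ?_ ?_)
    · rw [norm_mul]
      calc ‖a c‖ * ‖∏ i ∈ s, a i - ∏ i ∈ s, b i‖ ≤ 1 * δ :=
          mul_le_mul (ha c) ih (norm_nonneg _) zero_le_one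
        _ = δ := one_mul δ
    · rw [norm_mul]
      have hpb : ‖∏ i ∈ s, b i‖ ≤ 1 :=
        (Finset.norm_prod_le _ _).trans (Finset.prod_le_one (fun i _ => norm_nonneg _) (fun i _ => hb i))
      calc ‖a c - b c‖ * ‖∏ i ∈ s, b i‖ ≤ δ * 1 :=
          mul_le_mul (hab c) hpb (norm_nonneg _) hδ
        _ = δ := mul_one δ

lemma aux_eval_le_one {N : ℕ} (g : MvPolynomial (Fin N) K)
    (hg : ∀ d, ‖MvPolynomial.coeff d g‖ ≤ 1) (x : Fin N → K) (hx : ∀ i, ‖x i‖ ≤ 1) :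
    ‖MvPolynomial.eval x g‖ ≤ 1 := by
  rw [MvPolynomial.eval_eq]
  refine norm_sum_le_of_forall_le_of_nonneg zero_le_one fun d _ => ?_
  rw [norm_mul]
  calc ‖MvPolynomial.coeff d g‖ * ‖∏ i ∈ d.support, x i ^ d i‖ ≤ 1 * 1 := by
        refine mul_le_mul (hg d) ?_ (norm_nonneg _) zero_le_one
        refine (Finset.norm_prod_le _ _).trans (Finset.prod_le_one (fun i _ => norm_nonneg _)
          fun i _ => by rw [norm_pow]; exact pow_le_one₀ (norm_nonneg _) (hx i))
    _ = 1 := one_mul 1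

lemma aux_eval_sub {δ : ℝ} (hδ : 0 ≤ δ) {N : ℕ} (g : MvPolynomial (Fin N) K)
    (hg : ∀ d, ‖MvPolynomial.coeff d g‖ ≤ 1) (x y : Fin N → K)
    (hx : ∀ i, ‖x i‖ ≤ 1) (hy : ∀ i, ‖y i‖ ≤ 1) (hxy : ∀ i, ‖x i - y i‖ ≤ δ) :
    ‖MvPolynomial.eval x g - MvPolynomial.eval y g‖ ≤ δ := by
  rw [MvPolynomial.eval_eq, MvPolynomial.eval_eq, ← Finset.sum_sub_distrib]
  refine norm_sum_le_of_forall_le_of_nonneg hδ fun d _ => ?_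
  have h : MvPolynomial.coeff d g * ∏ i ∈ d.support, x i ^ d i - MvPolynomial.coeff d g * ∏ i ∈ d.support, y i ^ d i
      = MvPolynomial.coeff d g * ((∏ i ∈ d.support, x i ^ d i) - ∏ i ∈ d.support, y i ^ d i) := by ring
  rw [h, norm_mul]
  calc ‖MvPolynomial.coeff d g‖ * ‖(∏ i ∈ d.support, x i ^ d i) - ∏ i ∈ d.support, y i ^ d i‖ ≤ 1 * δ := by
        refine mul_le_mul (hg d) ?_ (norm_nonneg _) zero_le_one
        refine aux_prod_sub hδ _ _ _ (fun i => ?_) (fun i => ?_) (fun i => ?_)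
        · rw [norm_pow]; exact pow_le_one₀ (norm_nonneg _) (hx i)
        · rw [norm_pow]; exact pow_le_one₀ (norm_nonneg _) (hy i)
        · exact aux_pow_sub hδ _ _ _ (hx i) (hy i) (hxy i)
    _ = δ := one_mul δ

end Aux


/-- a lift of `p`-th power `F_i = G_i^p + ϖ f_i` is attracting on every
residue disc around a fixed point `x₀ ∈ (K°)^N`: for `x ≠ x₀` in the same residue disc,
`‖F(x) - F(x₀)‖ < ‖x - x₀‖` in sup norm. -/
theorem statement7 {K : Type*} [NontriviallyNormedField K] [IsUltrametricDist K]
    [CompleteSpace K] [IsAlgClosed K]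
    (p : ℕ) (hp : p.Prime) (hpnorm : ‖(p : K)‖ < 1)
    {N : ℕ} (F G f : Fin N → MvPolynomial (Fin N) K) (ϖ : K)
    (hϖ₁ : ‖(p : K)‖ ≤ ‖ϖ‖) (hϖ₂ : ‖ϖ‖ < 1)
    (hGcoeff : ∀ i d, ‖MvPolynomial.coeff d (G i)‖ ≤ 1)
    (hfcoeff : ∀ i d, ‖MvPolynomial.coeff d (f i)‖ ≤ 1)
    (hF : ∀ i, F i = (G i) ^ p + MvPolynomial.C ϖ * f i)
    (x₀ : Fin N → K) (hx₀ : ∀ i, ‖x₀ i‖ ≤ 1)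
    (hfix : ∀ i, MvPolynomial.eval x₀ (F i) = x₀ i)
    (x : Fin N → K) (hx : ∀ i, ‖x i‖ ≤ 1)
    (hred : ∀ i, ‖x i - x₀ i‖ < 1)
    (j : Fin N) (hjmax : ∀ i, ‖x i - x₀ i‖ ≤ ‖x j - x₀ j‖) (hne : x j ≠ x₀ j) :
    ∀ i, ‖MvPolynomial.eval x (F i) - MvPolynomial.eval x₀ (F i)‖ < ‖x j - x₀ j‖ := by
  intro i
  set δ : ℝ := ‖x j - x₀ j‖ with hδdef
  have hδpos : 0 < δ := norm_pos_iff.mpr (sub_ne_zero.mpr hne)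
  have hδ1 : δ < 1 := hred j
  have hxy : ∀ i, ‖x i - x₀ i‖ ≤ δ := hjmax
  set A : K := MvPolynomial.eval x (G i) with hAdef
  set B : K := MvPolynomial.eval x₀ (G i) with hBdef
  have hA : ‖A‖ ≤ 1 := aux_eval_le_one _ (hGcoeff i) x hx
  have hB : ‖B‖ ≤ 1 := aux_eval_le_one _ (hGcoeff i) x₀ hx₀
  have ha : ‖A - B‖ ≤ δ := aux_eval_sub hδpos.le _ (hGcoeff i) x x₀ hx hx₀ hxy
  have hfd : ‖MvPolynomial.eval x (f i) - MvPolynomial.eval x₀ (f i)‖ ≤ δ :=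
    aux_eval_sub hδpos.le _ (hfcoeff i) x x₀ hx hx₀ hxy
  set c : ℝ := max (‖ϖ‖ * δ) (δ * δ) with hcdef
  have hc0 : 0 ≤ c := le_trans (mul_nonneg hδpos.le hδpos.le) (le_max_right _ _)
  have hcδ : c < δ := by
    refine max_lt ?_ ?_
    · exact mul_lt_of_lt_one_left hδpos hϖ₂
    · exact mul_lt_of_lt_one_left hδpos hδ1
  have hpow : ‖A ^ p - B ^ p‖ ≤ c := by
    have hAB : A = B + (A - B) := by ring
    have hsum : A ^ p - B ^ p =
        ∑ k ∈ Finset.range p, B ^ k * (A - B) ^ (p - k) * (p.choose k : K) := by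
      rw [hAB, add_pow, Finset.sum_range_succ]
      simp
    rw [hsum]
    refine IsUltrametricDist.norm_sum_le_of_forall_le_of_nonneg hc0 fun k hk => ?_
    have hkp : k < p := Finset.mem_range.mp hk
    have hank : ‖(A - B) ^ (p - k)‖ ≤ δ := by
      rw [norm_pow]
      calc ‖A - B‖ ^ (p - k) ≤ δ ^ (p - k) :=
            pow_le_pow_left₀ (norm_nonneg _) ha _
        _ ≤ δ ^ 1 := pow_le_pow_of_le_one hδpos.le hδ1.le (by omega)
        _ = δ := pow_one δ
    have hBk : ‖B ^ k‖ ≤ 1 := by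
      rw [norm_pow]; exact pow_le_one₀ (norm_nonneg _) hB
    rcases Nat.eq_zero_or_pos k with hk0 | hk0
    · -- k = 0 : term is (A-B)^p, bounded by δ*δ
      subst hk0
      have hp2 : 2 ≤ p := hp.two_le
      have : ‖B ^ 0 * (A - B) ^ (p - 0) * ((p.choose 0 : ℕ) : K)‖ = ‖A - B‖ ^ p := by
        simp [norm_pow]
      rw [this]
      refine le_trans ?_ (le_max_right _ _)
      calc ‖A - B‖ ^ p ≤ δ ^ p := pow_le_pow_left₀ (norm_nonneg _) ha _
        _ ≤ δ ^ 2 := pow_le_pow_of_le_one hδpos.le hδ1.le hp2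
        _ = δ * δ := sq δ
    · -- 0 < k < p : binomial coefficient divisible by p
      obtain ⟨m, hm⟩ := hp.dvd_choose_self (by omega) hkp
      have hchoose : ‖((p.choose k : ℕ) : K)‖ ≤ ‖(p : K)‖ := by
        rw [hm]
        push_cast
        rw [norm_mul]
        calc ‖(p : K)‖ * ‖(m : K)‖ ≤ ‖(p : K)‖ * 1 :=
              mul_le_mul_of_nonneg_left (IsUltrametricDist.norm_natCast_le_one K m)
                (norm_nonneg _)
          _ = ‖(p : K)‖ := mul_one _
      refine le_trans ?_ (le_max_left _ _)
      rw [norm_mul, norm_mul]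
      calc ‖B ^ k‖ * ‖(A - B) ^ (p - k)‖ * ‖((p.choose k : ℕ) : K)‖
          ≤ 1 * δ * ‖ϖ‖ := by
            refine mul_le_mul (mul_le_mul hBk hank (norm_nonneg _) zero_le_one)
              (hchoose.trans hϖ₁) (norm_nonneg _) (by positivity)
        _ = ‖ϖ‖ * δ := by ring
  have hϖf : ‖ϖ * (MvPolynomial.eval x (f i) - MvPolynomial.eval x₀ (f i))‖ ≤ c := by
    refine le_trans ?_ (le_max_left _ _)
    rw [norm_mul]
    exact mul_le_mul_of_nonneg_left hfd (norm_nonneg _)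
  have hkey : MvPolynomial.eval x (F i) - MvPolynomial.eval x₀ (F i)
      = (A ^ p - B ^ p) + ϖ * (MvPolynomial.eval x (f i) - MvPolynomial.eval x₀ (f i)) := by
    rw [hF i]
    simp only [map_add, map_mul, map_pow, MvPolynomial.eval_C, hAdef, hBdef]
    ring
  rw [hkey]
  calc ‖(A ^ p - B ^ p) + ϖ * (MvPolynomial.eval x (f i) - MvPolynomial.eval x₀ (f i))‖
      ≤ max ‖A ^ p - B ^ p‖ ‖ϖ * (MvPolynomial.eval x (f i) - MvPolynomial.eval x₀ (f i))‖ :=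
        IsUltrametricDist.norm_add_le_max _ _
    _ ≤ c := max_le hpow hϖf
    _ < δ := hcδ
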